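/- For every natural number k ≥ 1, the commutator subgroup of the group defined by the presentation ⟨d, t | dᵏ = 1, t²dtd⁻¹t⁻¹d = 1⟩ is cyclic of order 1 + 4 + 4² + ⋯ + 4^{k−1} = (4ᵏ − 1)/3. -/

import Mathlib

open Subgroup

/-- Relators for the presentation `⟨d, t | dᵏ, t²dtd⁻¹t⁻¹d⟩`,
with generators `d = 0`, `t = 1`. -/
def relsDT' (k : ℕ) : Set (FreeGroup (Fin 2)) :=
  let d : FreeGroup (Fin 2) := FreeGroup.of 0
  let t : FreeGroup (Fin 2) := FreeGroup.of 1
  {d ^ k, t ^ 2 * d * t * d⁻¹ * t⁻¹ * d}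

namespace CommDTAux

lemma key_nat (k : ℕ) : 3 * (∑ i ∈ Finset.range k, 4 ^ i) + 1 = 4 ^ k := by
  induction k with
  | zero => simp
  | succ n ih => rw [Finset.sum_range_succ, mul_add, pow_succ]; omega

variable {m k : ℕ}

/-- The permutation `x ↦ 2x` of `ZMod m`. -/
def Tp (m k : ℕ) (h : (4 : ZMod m) ^ k = 1) (hk : 1 ≤ k) : Equiv.Perm (ZMod m) where
  toFun x := 2 * x
  invFun x := 2 ^ (2 * k - 1) * x
  left_inv x := by
    have h2 : (2 : ZMod m) ^ (2 * k - 1) * 2 = 4 ^ k := by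
      rw [← pow_succ, show 2 * k - 1 + 1 = 2 * k by omega, pow_mul]; norm_num
    show (2 : ZMod m) ^ (2 * k - 1) * (2 * x) = x
    rw [← mul_assoc, h2, h, one_mul]
  right_inv x := by
    have h2 : (2 : ZMod m) * 2 ^ (2 * k - 1) = 4 ^ k := by
      rw [← pow_succ', show 2 * k - 1 + 1 = 2 * k by omega, pow_mul]; norm_num
    show (2 : ZMod m) * (2 ^ (2 * k - 1) * x) = x
    rw [← mul_assoc, h2, h, one_mul]

/-- The permutation `x ↦ 4^(k-1) x + 1` of `ZMod m`. -/
def Dp (m k : ℕ) (h : (4 : ZMod m) ^ k = 1) (hk : 1 ≤ k) : Equiv.Perm (ZMod m) where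
  toFun x := 4 ^ (k - 1) * x + 1
  invFun x := 4 * x - 4
  left_inv x := by
    have h4 : (4 : ZMod m) * 4 ^ (k - 1) = 1 := by
      rw [← pow_succ', show k - 1 + 1 = k by omega, h]
    show (4 : ZMod m) * (4 ^ (k - 1) * x + 1) - 4 = x
    rw [mul_add, ← mul_assoc, h4]; ring
  right_inv x := by
    have h4 : (4 : ZMod m) ^ (k - 1) * 4 = 1 := by
      rw [← pow_succ, show k - 1 + 1 = k by omega, h]
    show (4 : ZMod m) ^ (k - 1) * (4 * x - 4) + 1 = x
    rw [mul_sub, ← mul_assoc, h4]; ring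

variable (h : (4 : ZMod m) ^ k = 1) (hk : 1 ≤ k)

lemma Tp_apply (x : ZMod m) : Tp m k h hk x = 2 * x := rfl

lemma Dp_apply (x : ZMod m) : Dp m k h hk x = 4 ^ (k - 1) * x + 1 := rfl

lemma Tp_inv_apply (x : ZMod m) : (Tp m k h hk)⁻¹ x = 2 ^ (2 * k - 1) * x := rfl

lemma Dp_inv_apply (x : ZMod m) : (Dp m k h hk)⁻¹ x = 4 * x - 4 := rfl

lemma Dp_pow_apply :
    ∀ j, 1 ≤ j → ∀ x : ZMod m, ((Dp m k h hk) ^ j) x =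
      4 ^ ((k - 1) * j) * x +
        4 ^ ((k - 1) * (j - 1)) * ((∑ i ∈ Finset.range j, 4 ^ i : ℕ) : ZMod m) := by
  intro j
  induction j with
  | zero => omega
  | succ n ih =>
    intro _ x
    rcases Nat.lt_or_ge n 1 with h1 | hn
    · have hn : n = 0 := by omega
      subst hn
      simp [Dp_apply, mul_one]
    · have hx : ((Dp m k h hk) ^ (n + 1)) x = (Dp m k h hk) (((Dp m k h hk) ^ n) x) := by
        rw [pow_succ']; rfl
      rw [hx, ih hn, Dp_apply]
      set β : ZMod m := 4 ^ (k - 1) with hβ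
      set A : ZMod m := 4 ^ ((k - 1) * n) with hA
      set B : ZMod m := 4 ^ ((k - 1) * (n - 1)) with hB
      set S : ZMod m := ((∑ i ∈ Finset.range n, 4 ^ i : ℕ) : ZMod m) with hS
      have e1 : β * A = 4 ^ ((k - 1) * (n + 1)) := by
        rw [hβ, hA, ← pow_add]; congr 1; ring
      have e2 : β * B = A := by
        rw [hβ, hB, hA, ← pow_add]; congr 1
        calc k - 1 + (k - 1) * (n - 1) = (k - 1) * (n - 1 + 1) := by ring
          _ = (k - 1) * n := by rw [show n - 1 + 1 = n by omega]
      have key : A * 4 ^ n = 1 := by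
        rw [hA, ← pow_add]
        have h1 : (k - 1) * n = k * n - n := by rw [Nat.sub_one_mul]
        have h2 : n ≤ k * n := Nat.le_mul_of_pos_left n (by omega)
        rw [show (k - 1) * n + n = k * n by omega, pow_mul, h, one_pow]
      have e3 : ((∑ i ∈ Finset.range (n + 1), 4 ^ i : ℕ) : ZMod m)
          = S + (4 : ZMod m) ^ n := by
        rw [hS, Finset.sum_range_succ]; push_cast; ring
      rw [show n + 1 - 1 = n from rfl, e3]
      calc β * (A * x + B * S) + 1 = (β * A) * x + (β * B) * S + A * 4 ^ n := by
            rw [key]; ring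
        _ = 4 ^ ((k - 1) * (n + 1)) * x + A * (S + 4 ^ n) := by rw [e1, e2]; ring

lemma Dp_pow_k (hs : ((∑ i ∈ Finset.range k, 4 ^ i : ℕ) : ZMod m) = 0) :
    (Dp m k h hk) ^ k = 1 := by
  ext x
  rw [Dp_pow_apply h hk k hk x, hs, mul_zero, add_zero,
    show (k - 1) * k = k * (k - 1) by ring, pow_mul, h, one_pow, one_mul]
  rfl

lemma rel2_holds :
    (Tp m k h hk) ^ 2 * Dp m k h hk * Tp m k h hk * (Dp m k h hk)⁻¹ * (Tp m k h hk)⁻¹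
      * Dp m k h hk = 1 := by
  have e1 : (4 : ZMod m) * 4 ^ (k - 1) = 1 := by
    rw [← pow_succ', show k - 1 + 1 = k by omega, h]
  have e2 : (2 : ZMod m) * 2 ^ (2 * k - 1) = 1 := by
    rw [← pow_succ', show 2 * k - 1 + 1 = 2 * k by omega, pow_mul]
    norm_num [h]
  ext x
  rw [show ((Tp m k h hk) ^ 2 * Dp m k h hk * Tp m k h hk * (Dp m k h hk)⁻¹ * (Tp m k h hk)⁻¹
      * Dp m k h hk) x = (Tp m k h hk) ((Tp m k h hk) ((Dp m k h hk) ((Tp m k h hk)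
        ((Dp m k h hk)⁻¹ ((Tp m k h hk)⁻¹ ((Dp m k h hk) x)))))) by
      simp [Equiv.Perm.mul_apply, pow_succ]]
  rw [Dp_apply, Tp_inv_apply, Dp_inv_apply, Tp_apply, Dp_apply, Tp_apply, Tp_apply]
  show _ = (1 : Equiv.Perm (ZMod m)) x
  rw [Equiv.Perm.one_apply]
  linear_combination (16 * (4:ZMod m) ^ (k-1) * 4 ^ (k-1) * x + 16 * 4 ^ (k-1)) * e2 +
    (x * (4 * (4:ZMod m) ^ (k-1) + 1) - 4) * e1

lemma DT2_apply (x : ZMod m) :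
    (Dp m k h hk * (Tp m k h hk) ^ 2) x = x + 1 := by
  have e1 : (4 : ZMod m) ^ (k - 1) * 4 = 1 := by
    rw [← pow_succ, show k - 1 + 1 = k by omega, h]
  rw [show (Dp m k h hk * (Tp m k h hk) ^ 2) x
      = (Dp m k h hk) ((Tp m k h hk) ((Tp m k h hk) x)) by
    simp [Equiv.Perm.mul_apply, pow_succ]]
  rw [Tp_apply, Tp_apply, Dp_apply]
  linear_combination x * e1

end CommDTAux

theorem commutator_relsDT'_cyclic (k : ℕ) (hk : 1 ≤ k) :
    IsCyclic ↥(commutator (PresentedGroup (relsDT' k))) ∧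
      Nat.card ↥(commutator (PresentedGroup (relsDT' k))) =
        ∑ i ∈ Finset.range k, 4 ^ i := by
  classical
  set m := ∑ i ∈ Finset.range k, 4 ^ i with hmdef
  have hm4 : 3 * m + 1 = 4 ^ k := CommDTAux.key_nat k
  have hk4 : 4 ^ k = 4 * 4 ^ (k - 1) := by
    rw [← pow_succ', show k - 1 + 1 = k by omega]
  have hmpos : 0 < m := by
    have := hk4; omega
  have hmodd : m % 2 = 1 := by
    have := hk4; omega
  -- notation for the presented group
  set G := PresentedGroup (relsDT' k) with hG
  set δ : G := PresentedGroup.of 0 with hδ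
  set τ : G := PresentedGroup.of 1 with hτ
  have hmem1 : (FreeGroup.of 0 : FreeGroup (Fin 2)) ^ k ∈ relsDT' k := by
    left; rfl
  have hmem2 : (FreeGroup.of 1 : FreeGroup (Fin 2)) ^ 2 * FreeGroup.of 0 * FreeGroup.of 1 *
      (FreeGroup.of 0)⁻¹ * (FreeGroup.of 1)⁻¹ * FreeGroup.of 0 ∈ relsDT' k := by
    right; rfl
  have hrel : ∀ r ∈ relsDT' k, PresentedGroup.mk (relsDT' k) r = 1 := fun r hr =>
    (QuotientGroup.eq_one_iff r).mpr (Subgroup.subset_normalClosure hr)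
  have h1 : δ ^ k = 1 := by
    have := hrel _ hmem1
    rwa [map_pow] at this
  have h2 : τ ^ 2 * δ * τ * δ⁻¹ * τ⁻¹ * δ = 1 := by
    have := hrel _ hmem2
    simp only [map_mul, map_inv, map_pow] at this
    exact this
  set u : G := δ * τ ^ 2 with hu
  have hδ' : δ = u * (τ ^ 2)⁻¹ := by rw [hu]; group
  -- key conjugation identity
  have L1 : τ * u * τ⁻¹ = u ^ 2 := by
    have e : τ * u * τ⁻¹ * u⁻¹ * u⁻¹ = δ * (τ ^ 2 * δ * τ * δ⁻¹ * τ⁻¹ * δ)⁻¹ * δ⁻¹ := by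
      rw [hu]; group
    rw [h2] at e
    simp only [inv_one, mul_one, mul_inv_cancel] at e
    rw [pow_two]
    exact mul_inv_eq_iff_eq_mul.mp (mul_inv_eq_one.mp e)
  have L1' : ∀ a : ℕ, τ * u ^ a * τ⁻¹ = u ^ (2 * a) := by
    intro a
    calc τ * u ^ a * τ⁻¹ = (τ * u * τ⁻¹) ^ a := conj_pow.symm
      _ = (u ^ 2) ^ a := by rw [L1]
      _ = u ^ (2 * a) := by rw [← pow_mul]
  have L1m : ∀ a : ℕ, τ * u ^ a = u ^ (2 * a) * τ := by
    intro a; rw [← L1' a]; group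
  have C' : ∀ n a : ℕ, τ ^ n * u ^ a = u ^ (2 ^ n * a) * τ ^ n := by
    intro n
    induction n with
    | zero => intro a; simp
    | succ n ih =>
      intro a
      calc τ ^ (n + 1) * u ^ a = τ ^ n * (τ * u ^ a) := by rw [pow_succ]; group
        _ = τ ^ n * (u ^ (2 * a) * τ) := by rw [L1m]
        _ = (τ ^ n * u ^ (2 * a)) * τ := by group
        _ = u ^ (2 ^ n * (2 * a)) * τ ^ n * τ := by rw [ih]
        _ = u ^ (2 ^ (n + 1) * a) * τ ^ (n + 1) := by
            rw [show 2 ^ n * (2 * a) = 2 ^ (n + 1) * a by ring, pow_succ]; group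
  have L3 : ∀ j : ℕ, τ ^ (2 * j) * (u * (τ ^ 2)⁻¹) ^ j
      = u ^ (4 * ∑ i ∈ Finset.range j, 4 ^ i) := by
    intro j
    induction j with
    | zero => simp
    | succ n ih =>
      have hstep : τ ^ (2 * (n + 1)) * (u * (τ ^ 2)⁻¹) ^ (n + 1)
          = u ^ (2 ^ (2 * n + 2) * 1) * (τ ^ (2 * n) * (u * (τ ^ 2)⁻¹) ^ n) := by
        calc τ ^ (2 * (n + 1)) * (u * (τ ^ 2)⁻¹) ^ (n + 1)
            = τ ^ (2 * n + 2) * ((u * (τ ^ 2)⁻¹) * (u * (τ ^ 2)⁻¹) ^ n) := by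
              rw [show 2 * (n + 1) = 2 * n + 2 by ring,
                pow_succ' (u * (τ ^ 2)⁻¹) n]
          _ = (τ ^ (2 * n + 2) * u ^ 1) * ((τ ^ 2)⁻¹ * (u * (τ ^ 2)⁻¹) ^ n) := by
              simp only [pow_one, mul_assoc]
          _ = (u ^ (2 ^ (2 * n + 2) * 1) * τ ^ (2 * n + 2)) *
                ((τ ^ 2)⁻¹ * (u * (τ ^ 2)⁻¹) ^ n) := by rw [C']
          _ = u ^ (2 ^ (2 * n + 2) * 1) * (τ ^ (2 * n) * (u * (τ ^ 2)⁻¹) ^ n) := by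
              rw [pow_add]; group
      rw [hstep, ih, ← pow_add]
      congr 1
      have h44 : 2 ^ (2 * n + 2) = 4 * 4 ^ n := by
        calc 2 ^ (2 * n + 2) = 4 ^ (n + 1) := by
              rw [show 2 * n + 2 = 2 * (n + 1) by ring, pow_mul]; norm_num
          _ = 4 * 4 ^ n := by rw [pow_succ]; ring
      rw [Finset.sum_range_succ, h44]
      ring
  have E1 : τ ^ (2 * k) = u ^ (4 * m) := by
    have e := L3 k
    rw [← hδ', h1, mul_one, ← hmdef] at e
    exact e
  have E3 : u ^ (4 * m) = 1 := by
    have ha : τ * u ^ (4 * m) = u ^ (2 * (4 * m)) * τ := L1m (4 * m)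
    have hb : τ * u ^ (4 * m) = u ^ (4 * m) * τ := by
      rw [← E1, ← pow_succ', ← pow_succ]
    rw [hb] at ha
    have hc : u ^ (4 * m) = u ^ (2 * (4 * m)) := mul_right_cancel ha
    have hd : u ^ (2 * (4 * m)) = u ^ (4 * m) * u ^ (4 * m) := by
      rw [← pow_add]; congr 1; ring
    rw [hd] at hc
    nth_rewrite 1 [← mul_one (u ^ (4 * m))] at hc
    exact (mul_left_cancel hc).symm
  have E2 : τ ^ (2 * k) = 1 := by rw [E1, E3]
  have E4 : u ^ (3 * m) = 1 := by
    have e := C' (2 * k) 1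
    rw [E2, one_mul, mul_one, pow_one, mul_one] at e
    have h2k : 2 ^ (2 * k) = 3 * m + 1 := by
      rw [pow_mul]; norm_num [hm4]
    rw [h2k, pow_succ] at e
    have e2 : u ^ (3 * m) * u = 1 * u := by rw [← e, one_mul]
    exact mul_right_cancel e2
  have hdvd : orderOf u ∣ m := by
    have d1 := orderOf_dvd_of_pow_eq_one E3
    have d2 := orderOf_dvd_of_pow_eq_one E4
    have hg := Nat.dvd_gcd d2 d1
    rwa [Nat.gcd_mul_right, show Nat.gcd 3 4 = 1 from rfl, one_mul] at hg
  have hum : u ^ m = 1 := orderOf_dvd_iff_pow_eq_one.mp hdvd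
  -- the homomorphism to permutations of `ZMod m`
  haveI : NeZero m := ⟨by omega⟩
  have h4Z : (4 : ZMod m) ^ k = 1 := by
    have e : ((4 ^ k : ℕ) : ZMod m) = ((3 * m + 1 : ℕ) : ZMod m) := by rw [hm4]
    push_cast at e
    rw [ZMod.natCast_self] at e
    simpa using e
  set T := CommDTAux.Tp m k h4Z hk with hT
  set D := CommDTAux.Dp m k h4Z hk with hD
  set f : Fin 2 → Equiv.Perm (ZMod m) := ![D, T] with hf
  have hf0 : f 0 = D := rfl
  have hf1 : f 1 = T := rfl
  have hrels : ∀ r ∈ relsDT' k, FreeGroup.lift f r = 1 := by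
    intro r hr
    simp only [relsDT', Set.mem_insert_iff, Set.mem_singleton_iff] at hr
    rcases hr with rfl | rfl
    · rw [map_pow, FreeGroup.lift_apply_of, hf0]
      exact CommDTAux.Dp_pow_k h4Z hk (by rw [← hmdef, ZMod.natCast_self])
    · simp only [map_mul, map_inv, map_pow, FreeGroup.lift_apply_of, hf0, hf1]
      exact CommDTAux.rel2_holds h4Z hk
  set ψ := PresentedGroup.toGroup hrels with hψ
  have hψu : ψ u = D * T ^ 2 := by
    rw [hu, map_mul, map_pow, hδ, hτ]
    rw [show ψ (PresentedGroup.of 0) = f 0 from PresentedGroup.toGroup.of hrels,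
      show ψ (PresentedGroup.of 1) = f 1 from PresentedGroup.toGroup.of hrels, hf0, hf1]
  have hψun : ∀ n : ℕ, ∀ x : ZMod m, ((ψ u) ^ n) x = x + n := by
    intro n
    induction n with
    | zero => intro x; simp
    | succ n ih =>
      intro x
      rw [pow_succ, Equiv.Perm.mul_apply]
      have hx1 : (ψ u) x = x + 1 := by rw [hψu]; exact CommDTAux.DT2_apply h4Z hk x
      rw [hx1, ih (x + 1)]
      push_cast
      ring
  have hmdvd : m ∣ orderOf u := by
    have h0 : ((ψ u) ^ orderOf u) 0 = (0 : ZMod m) := by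
      rw [← map_pow, pow_orderOf_eq_one, map_one]; rfl
    rw [hψun (orderOf u) 0, zero_add] at h0
    exact (ZMod.natCast_eq_zero_iff _ _).mp h0
  have horder : orderOf u = m := Nat.dvd_antisymm hdvd hmdvd
  -- `u` lies in the commutator subgroup
  have humem : u ∈ commutator G := by
    open scoped commutatorElement in
    have huc : u = ⁅τ, u⁆ := by
      rw [commutatorElement_def, L1]; group
    rw [_root_.commutator_def]
    exact huc ▸ Subgroup.commutator_mem_commutator (Subgroup.mem_top τ) (Subgroup.mem_top u)
  -- conjugation formulas
  have hcti : τ⁻¹ * u * τ = u ^ ((m + 1) / 2) := by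
    have h2a : 2 * ((m + 1) / 2) = m + 1 := by omega
    have e : τ⁻¹ * u ^ (2 * ((m + 1) / 2)) * τ = u ^ ((m + 1) / 2) := by
      rw [← L1' ((m + 1) / 2)]; group
    rw [h2a, pow_succ, hum, one_mul] at e
    exact e
  have hcd4 : ∀ a : ℕ, δ * u ^ (4 * a) * δ⁻¹ = u ^ a := by
    intro a
    have hc2 := C' 2 a
    rw [show (2 : ℕ) ^ 2 = 4 from rfl] at hc2
    have e1 : (τ ^ 2)⁻¹ * u ^ (4 * a) * τ ^ 2 = u ^ a := by
      calc (τ ^ 2)⁻¹ * u ^ (4 * a) * τ ^ 2 = (τ ^ 2)⁻¹ * (u ^ (4 * a) * τ ^ 2) := by group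
        _ = (τ ^ 2)⁻¹ * (τ ^ 2 * u ^ a) := by rw [← hc2]
        _ = u ^ a := by group
    calc δ * u ^ (4 * a) * δ⁻¹ = u * ((τ ^ 2)⁻¹ * u ^ (4 * a) * τ ^ 2) * u⁻¹ := by
          rw [hδ']; group
      _ = u * u ^ a * u⁻¹ := by rw [e1]
      _ = u ^ a := by group
  have hcd : δ * u * δ⁻¹ = u ^ (4 ^ (k - 1)) := by
    have e := hcd4 (4 ^ (k - 1))
    rw [show 4 * 4 ^ (k - 1) = 3 * m + 1 by omega, pow_succ, E4, one_mul] at e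
    exact e
  have hcdi : δ⁻¹ * u * δ = u ^ (4 : ℕ) := by
    have e := hcd4 1
    rw [mul_one, pow_one] at e
    calc δ⁻¹ * u * δ = δ⁻¹ * (δ * u ^ 4 * δ⁻¹) * δ := by rw [e]
      _ = u ^ (4 : ℕ) := by group
  -- `zpowers u` is normal
  have hnormalizer : ∀ g : G, ∀ a b : ℕ, g * u * g⁻¹ = u ^ a → g⁻¹ * u * g = u ^ b →
      g ∈ Subgroup.normalizer (zpowers u : Set G) := by
    intro g a b hga hgb
    rw [Subgroup.mem_normalizer_iff]
    intro h
    constructor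
    · rintro ⟨n, rfl⟩
      have e : g * u ^ n * g⁻¹ = (g * u * g⁻¹) ^ n := conj_zpow.symm
      rw [e, hga]
      exact Subgroup.zpow_mem _ (Subgroup.pow_mem _ (Subgroup.mem_zpowers u) a) n
    · intro hg
      obtain ⟨n, hn⟩ := hg
      have e0 : h = g⁻¹ * (g * h * g⁻¹) * g := by group
      have e : g⁻¹ * u ^ n * g = (g⁻¹ * u * g) ^ n := by
        have := conj_zpow (i := n) (a := g⁻¹) (b := u)
        rw [inv_inv] at this
        exact this.symm
      rw [e0, ← hn, e, hgb]
      exact Subgroup.zpow_mem _ (Subgroup.pow_mem _ (Subgroup.mem_zpowers u) b) n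
  have hnormal : (zpowers u).Normal := by
    apply Subgroup.normalizer_eq_top_iff.mp
    rw [eq_top_iff, ← PresentedGroup.closure_range_of (relsDT' k), Subgroup.closure_le]
    rintro x ⟨i, rfl⟩
    fin_cases i
    · exact hnormalizer δ (4 ^ (k - 1)) 4 hcd hcdi
    · exact hnormalizer τ 2 ((m + 1) / 2) L1 hcti
  haveI := hnormal
  -- the quotient by `zpowers u` is abelian
  set π := QuotientGroup.mk' (zpowers u) with hπ
  have hπu : π u = 1 := by
    rw [hπ]
    exact (QuotientGroup.eq_one_iff u).mpr (Subgroup.mem_zpowers u)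
  have hπδ : π δ = (π τ ^ 2)⁻¹ := by
    rw [hδ', map_mul, map_inv, map_pow, hπu, one_mul]
  have hgenQ : ∀ x : G ⧸ zpowers u, x ∈ zpowers (π τ) := by
    have hcomap : ∀ g : G, g ∈ (zpowers (π τ)).comap π := by
      apply PresentedGroup.generated_by
      intro j
      fin_cases j
      · show PresentedGroup.of (0 : Fin 2) ∈ (zpowers (π τ)).comap π
        rw [Subgroup.mem_comap, ← hδ, hπδ]
        exact Subgroup.inv_mem _ (Subgroup.pow_mem _ (Subgroup.mem_zpowers _) 2)
      · show PresentedGroup.of (1 : Fin 2) ∈ (zpowers (π τ)).comap π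
        rw [Subgroup.mem_comap, ← hτ]
        exact Subgroup.mem_zpowers _
    intro x
    obtain ⟨g, rfl⟩ := QuotientGroup.mk'_surjective (zpowers u) x
    exact hcomap g
  have hcle : commutator G ≤ zpowers u := by
    have habQ : ∀ x y : G ⧸ zpowers u, x * y = y * x := by
      intro x y
      obtain ⟨a, ha⟩ := hgenQ x
      obtain ⟨b, hb⟩ := hgenQ y
      rw [← ha, ← hb, ← zpow_add, ← zpow_add, add_comm]
    let instQ : CommGroup (G ⧸ zpowers u) :=
      { (inferInstance : Group (G ⧸ zpowers u)) with mul_comm := habQ }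
    have e := Abelianization.commutator_subset_ker π
    rwa [QuotientGroup.ker_mk'] at e
  have hKeq : commutator G = zpowers u :=
    le_antisymm hcle (Subgroup.zpowers_le.mpr humem)
  constructor
  · rw [hKeq]
    constructor
    refine ⟨⟨u, Subgroup.mem_zpowers u⟩, ?_⟩
    rintro ⟨x, hx⟩
    obtain ⟨n, rfl⟩ := hx
    exact ⟨n, by ext; simp⟩
  · rw [hKeq, Nat.card_zpowers]
    exact horder
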